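/- Assume the simultaneous Doeblin condition and fix α ∈ (0,1). Let x ∈ S satisfy J*(λ,x) = min_{y∈S} J*(λ,y), and suppose π ∈ 𝒫 is ε-optimal at x where ε ∈ (0, ξ). Then there exists a policy δ ∈ 𝒫* such that P_x^π = P_x^δ, i.e., the distribution of the state–action process {(X_t,A_t)} starting at x under π coincides with that under δ. -/

import Mathlib

open scoped Classical BigOperators ENNReal

namespace RiskSensitive

/-- A (history-dependent, randomized) policy for a finite MDP: given the past
(chronological list of (state, action) pairs) and the current state, it assigns a
probability weight to each action, concentrated on the admissible actions. -/
structure Policy (S A : Type*) [Fintype S] [Fintype A] (Adm : S → Finset A) where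
  toFun : List (S × A) → S → A → ℝ
  nonneg : ∀ h s a, 0 ≤ toFun h s a
  sum_one : ∀ h s, ∑ a, toFun h s a = 1
  supp : ∀ h s a, a ∉ Adm s → toFun h s a = 0

variable {S A : Type*} [Fintype S] [Fintype A]
variable (Adm : S → Finset A) (p : S → A → S → ℝ) (C : S → A → ℝ) (lam : ℝ)

/-- Probability of a finite trajectory (list of (action, next-state) pairs), given the
history so far and the current state. -/
noncomputable def pathProbAux (π : Policy S A Adm) :
    List (S × A) → S → List (A × S) → ℝ
  | _, _, [] => 1
  | hist, x, (a, y) :: rest =>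
      π.toFun hist x a * p x a y * pathProbAux π (hist ++ [(x, a)]) y rest

/-- `pathProb π x l` is `P_x^π[A_0 = a_0, X_1 = y_1, …]` for `l = [(a_0,y_1),…]`. -/
noncomputable def pathProb (π : Policy S A Adm) (x : S) (l : List (A × S)) : ℝ :=
  pathProbAux Adm p π [] x l

/-- Probability of a cylinder event depending on the first `n` (action, next-state) pairs. -/
noncomputable def cylProb (π : Policy S A Adm) (x : S) (n : ℕ)
    (E : (Fin n → A × S) → Prop) : ℝ :=
  ∑ v : Fin n → A × S, if E v then pathProb Adm p π x (List.ofFn v) else 0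

/-- The state `X_t` along the trajectory encoded by `l`, starting from `x`. -/
def stateAt (x : S) (l : List (A × S)) (t : ℕ) : S :=
  (l.take t).foldl (fun _ q => q.2) x

/-- The final state of the finite trajectory `l` started at `x`. -/
def lastState (x : S) (l : List (A × S)) : S :=
  l.foldl (fun _ q => q.2) x

/-- `Σ_t w(X_t, A_t)` along the finite trajectory `l` started at `x`. -/
def costSum (w : S → A → ℝ) : S → List (A × S) → ℝ
  | _, [] => 0
  | x, (a, y) :: rest => w x a + costSum w y rest

/-- `J_n(λ,π,x) = (1/λ) log E_x^π[exp(λ Σ_{t<n} C(X_t,A_t))]`. -/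
noncomputable def Jn (π : Policy S A Adm) (x : S) (n : ℕ) : ℝ :=
  (1 / lam) * Real.log (∑ v : Fin n → A × S,
    pathProb Adm p π x (List.ofFn v) * Real.exp (lam * costSum C x (List.ofFn v)))

/-- The risk-sensitive average cost `J(λ,π,x) = limsup_n J_n(λ,π,x)/n`. -/
noncomputable def Javg (π : Policy S A Adm) (x : S) : ℝ :=
  Filter.limsup (fun n : ℕ => Jn Adm p C lam π x n / n) Filter.atTop

/-- Optimal risk-sensitive average cost `J*(λ,x)`. -/
noncomputable def Jopt (x : S) : ℝ :=
  ⨅ π : Policy S A Adm, Javg Adm p C lam π x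

/-- `π` is `ε`-optimal at `x`. -/
def EpsOptimalAt (π : Policy S A Adm) (x : S) (ε : ℝ) : Prop :=
  Javg Adm p C lam π x ≤ Jopt Adm p C lam x + ε

/-- `FirstExit Q v` : the trajectory `v` leaves `{Q}` for the first time exactly at its
last step, i.e. the exit time of `Q` equals `n`. -/
def FirstExit (Q : S → Prop) {n : ℕ} (v : Fin n → A × S) : Prop :=
  0 < n ∧ (∀ t : Fin n, (t : ℕ) + 1 < n → Q (v t).2) ∧
    ∀ t : Fin n, (t : ℕ) + 1 = n → ¬ Q (v t).2

/-- `E_x^π[ exp(Σ_{t<τ} w(X_t,A_t)) ]` where `τ = min{n ≥ 1 : ¬ Q (X_n)}` is the first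
exit time from `Q` (the contribution of `[τ = ∞]` is null when `τ < ∞` a.s.). -/
noncomputable def EexitExp (π : Policy S A Adm) (x : S) (Q : S → Prop)
    (w : S → A → ℝ) : ℝ≥0∞ :=
  ∑' n : ℕ, ∑ v : Fin n → A × S,
    if FirstExit Q v then
      ENNReal.ofReal (pathProb Adm p π x (List.ofFn v) *
        Real.exp (costSum w x (List.ofFn v)))
    else 0

/-- `E_x^π[ exp(Σ_{t<T} w(X_t,A_t)) ]` with `T` the first positive arrival time to `z`. -/
noncomputable def EhitExp (π : Policy S A Adm) (x z : S) (w : S → A → ℝ) : ℝ≥0∞ :=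
  EexitExp Adm p π x (fun y => y ≠ z) w

/-- `E_x^π[T]`, the expected first positive arrival time to `z`, computed as
`Σ_{n≥0} P_x^π[T > n]`. -/
noncomputable def ExpT (π : Policy S A Adm) (x z : S) : ℝ≥0∞ :=
  ∑' n : ℕ, ENNReal.ofReal
    (cylProb Adm p π x n (fun v => ∀ t : Fin n, (v t).2 ≠ z))

/-- `P_x^π[T > n]`, the probability that `z` is not visited during the first `n` steps. -/
noncomputable def survProb (π : Policy S A Adm) (x z : S) (n : ℕ) : ℝ :=
  cylProb Adm p π x n (fun v => ∀ t : Fin n, (v t).2 ≠ z)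

/-- The stationary policy induced by a choice function `f ∈ 𝔽`. -/
noncomputable def stationary (f : S → A) (hf : ∀ s, f s ∈ Adm s) : Policy S A Adm where
  toFun := fun _ s a => if a = f s then 1 else 0
  nonneg := by intro h s a; split <;> norm_num
  sum_one := by intro h s; simp
  supp := by
    intro h s a ha
    rw [if_neg]
    intro hEq
    exact ha (hEq ▸ hf s)

/-- The simultaneous Doeblin condition: `E_x^f[T] ≤ M` for every state `x` and every
stationary policy `f`, where `T` is the first positive arrival time to `z`. -/
def Doeblin (z : S) (M : ℝ) : Prop :=
  0 < M ∧ ∀ (x : S) (f : S → A) (hf : ∀ s, f s ∈ Adm s),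
    ExpT Adm p (stationary Adm f hf) x z ≤ ENNReal.ofReal M

/-- `B_g(x) = {a ∈ A(x) : g(x) = max{g(y) : p_{xy}(a) > 0}}`. -/
def Bg (g : S → ℝ) (x : S) : Set A :=
  {a | a ∈ Adm x ∧ g x = sSup (g '' {y | 0 < p x a y})}

/-- The family `𝒢` of functions characterizing `J*(λ,·)`. -/
def Gclass : Set (S → ℝ) :=
  {g | (∀ x, g x = sInf ((fun a => sSup (g '' {y | 0 < p x a y})) '' (Adm x : Set A))) ∧
    ∃ h : S → ℝ, ∀ x,
      sInf ((fun a => Real.exp (lam * C x a) * ∑ y, p x a y * Real.exp (lam * h y)) ''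
        Bg Adm p g x) ≤ Real.exp (lam * g x + lam * h x)}

/-- The class `𝒫*` of policies which always select actions in `B*(X_t)`. -/
def Pstar : Set (Policy S A Adm) :=
  {π | ∀ (x : S) (t : ℕ),
    cylProb Adm p π x (t + 1)
      (fun v => (v (Fin.last t)).1 ∈
        Bg Adm p (Jopt Adm p C lam) (stateAt x (List.ofFn v) t)) = 1}

/-- The deviation function
`h(x) = inf_{π ∈ 𝒫*} (1/λ) log E_x^π[exp(λα Σ_{t<T}(C(X_t,A_t) − J*(λ,X_t)))]`. -/
noncomputable def hdev (z : S) (α : ℝ) (x : S) : EReal :=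
  ⨅ π ∈ Pstar Adm p C lam, ((lam⁻¹ : ℝ) : EReal) *
    ENNReal.log (EhitExp Adm p π x z
      (fun s a => lam * α * (C s a - Jopt Adm p C lam s)))

/-- `ψ(ε) = (1/λ) inf_{δ∈𝒫*} log E_z^δ[exp(λ Σ_{t<T}(C(X_t,A_t) − γ₀ − 2ε))]`. -/
noncomputable def psi (z : S) (ε : ℝ) : EReal :=
  ((lam⁻¹ : ℝ) : EReal) * ⨅ π ∈ Pstar Adm p C lam,
    ENNReal.log (EhitExp Adm p π z z
      (fun s a => lam * (C s a - Jopt Adm p C lam z - 2 * ε)))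

/-- `ξ₀ = −(1−α) log β / (λα)`. -/
noncomputable def xi0 (α β : ℝ) : ℝ := -((1 - α) * Real.log β) / (lam * α)

/-- `ξ₁`: 1 if `J*(λ,·)` is constant, otherwise the minimum gap between distinct
values of `J*(λ,·)`. -/
noncomputable def xi1 : ℝ :=
  if ∀ u v : S, Jopt Adm p C lam u = Jopt Adm p C lam v then 1
  else sInf {d | ∃ u v : S, Jopt Adm p C lam u < Jopt Adm p C lam v ∧
    d = Jopt Adm p C lam v - Jopt Adm p C lam u}

/-- `ξ = min{ξ₀, ξ₁}`. -/
noncomputable def xi (α β : ℝ) : ℝ := min (xi0 lam α β) (xi1 Adm p C lam)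

/-- The shifted policy obtained by prefixing the fixed history `pre`. -/
def shiftPolicy (π : Policy S A Adm) (pre : List (S × A)) : Policy S A Adm where
  toFun := fun h s a => π.toFun (pre ++ h) s a
  nonneg := fun h s a => π.nonneg _ s a
  sum_one := fun h s => π.sum_one _ s
  supp := fun h s a ha => π.supp _ s a ha

/-- The history (list of (state, action) pairs) along the trajectory `l` started at `x`. -/
def histOf : S → List (A × S) → List (S × A)
  | _, [] => []
  | x, (a, y) :: rest => (x, a) :: histOf y rest


-- ===================== Auxiliary machinery =====================

section Aux

open Filter

lemma isBoundedUnder_of_tail (u : ℕ → ℝ) (K : ℝ) (h : ∀ n, 1 ≤ n → u n ≤ K) :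
    Filter.IsBoundedUnder (· ≤ ·) Filter.atTop u :=
  ⟨K, Filter.eventually_map.2 (Filter.eventually_atTop.2 ⟨1, h⟩)⟩

lemma isBoundedUnder_ge_of_tail (u : ℕ → ℝ) (K : ℝ) (h : ∀ n, 1 ≤ n → K ≤ u n) :
    Filter.IsBoundedUnder (· ≥ ·) Filter.atTop u :=
  ⟨K, Filter.eventually_map.2 (Filter.eventually_atTop.2 ⟨1, h⟩)⟩

lemma limsup_ratio_le (J J' : ℕ → ℝ) (K : ℝ) (m₁ m₂ : ℕ) (c : ℝ)
    (hJ : ∀ n : ℕ, 1 ≤ n → |J n| ≤ K * n) (hJ' : ∀ n : ℕ, 1 ≤ n → |J' n| ≤ K * n)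
    (h : ∀ n : ℕ, 1 ≤ n → J' (n + m₁) ≤ c + J (n + m₂)) :
    Filter.limsup (fun n : ℕ => J' n / n) Filter.atTop
      ≤ Filter.limsup (fun n : ℕ => J n / n) Filter.atTop := by
  have hdivJ : ∀ n : ℕ, 1 ≤ n → J n / n ≤ K := by
    intro n hn
    have hn' : (0:ℝ) < n := by exact_mod_cast hn
    rw [div_le_iff₀ hn']
    exact (abs_le.1 (hJ n hn)).2
  have hdivJ' : ∀ n : ℕ, 1 ≤ n → J' n / n ≤ K := by
    intro n hn
    have hn' : (0:ℝ) < n := by exact_mod_cast hn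
    rw [div_le_iff₀ hn']
    exact (abs_le.1 (hJ' n hn)).2
  have hbJ : Filter.IsBoundedUnder (· ≤ ·) Filter.atTop (fun n : ℕ => J n / n) :=
    isBoundedUnder_of_tail _ K hdivJ
  have hbJ' : Filter.IsBoundedUnder (· ≤ ·) Filter.atTop (fun n : ℕ => J' n / n) :=
    isBoundedUnder_of_tail _ K hdivJ'
  set L := Filter.limsup (fun n : ℕ => J n / n) Filter.atTop with hLdef
  apply le_of_forall_pos_le_add
  intro η hη
  have hev : ∀ᶠ n : ℕ in atTop, J n / n < L + η/2 :=
    Filter.eventually_lt_of_limsup_lt (by linarith) hbJ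
  rw [Filter.eventually_atTop] at hev
  obtain ⟨N, hN⟩ := hev
  have hN' : ∀ n : ℕ, N + 1 ≤ n → J n ≤ (L + η/2) * n := by
    intro n hn
    have hn1 : (0:ℝ) < n := by
      have : 1 ≤ n := by omega
      exact_mod_cast this
    have := (hN n (by omega)).le
    calc J n = (J n / n) * n := by field_simp
      _ ≤ (L + η/2) * n := mul_le_mul_of_nonneg_right this hn1.le
  obtain ⟨N₁, hN₁⟩ := exists_nat_ge ((c + (L + η/2) * m₂ - (L + η) * m₁) * (2 / η))
  have hbJ'lo : Filter.IsBoundedUnder (· ≥ ·) Filter.atTop (fun n : ℕ => J' n / n) := by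
    apply isBoundedUnder_ge_of_tail _ (-K)
    intro n hn
    have hn' : (0:ℝ) < n := by exact_mod_cast hn
    rw [le_div_iff₀ hn']
    have := (abs_le.1 (hJ' n hn)).1
    linarith
  refine Filter.limsup_le_of_le (hbJ'lo.isCoboundedUnder_le) ?_
  rw [Filter.eventually_atTop]
  refine ⟨m₁ + (max (N + 1) N₁) + 1, fun k hk => ?_⟩
  set n := k - m₁ with hndef
  have hkn : k = n + m₁ := by omega
  have hn1 : 1 ≤ n := by omega
  have hnN : N + 1 ≤ n + m₂ := by
    have : N + 1 ≤ n := by omega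
    omega
  have hnN₁ : (N₁ : ℝ) ≤ n := by
    have : N₁ ≤ n := by omega
    exact_mod_cast this
  have step1 : J' k ≤ c + (L + η/2) * (n + m₂) := by
    rw [hkn]
    calc J' (n + m₁) ≤ c + J (n + m₂) := h n hn1
      _ ≤ c + (L + η/2) * ((n : ℕ) + m₂ : ℕ) := by
          have := hN' (n + m₂) hnN
          linarith
      _ = c + (L + η/2) * ((n:ℝ) + m₂) := by push_cast; ring
  have hkpos : (0:ℝ) < k := by
    have : 1 ≤ k := by omega
    exact_mod_cast this
  have step2 : J' k ≤ (L + η) * k := by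
    have hkr : (k:ℝ) = (n:ℝ) + m₁ := by rw [hkn]; push_cast; ring
    have hc' : (c + (L + η/2) * m₂ - (L + η) * m₁) * (2/η) ≤ (n:ℝ) := le_trans hN₁ hnN₁
    have h2η : 0 < 2/η := by positivity
    have hmul := mul_le_mul_of_nonneg_right hc' (by positivity : (0:ℝ) ≤ η/2)
    have hid : (c + (L + η/2) * (m₂:ℝ) - (L + η) * m₁) * (2/η) * (η/2)
        = c + (L + η/2) * m₂ - (L + η) * m₁ := by field_simp
    have hkey : c + (L + η/2) * (m₂:ℝ) - (L + η) * m₁ ≤ (n:ℝ) * (η/2) := by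
      rw [hid] at hmul; linarith
    rw [hkr]
    linarith
  rw [div_le_iff₀ hkpos]
  exact step2

lemma limsup_finmax_le {ι : Type*} (T : Finset ι) (hT : T.Nonempty) (g : ι → ℕ → ℝ) (K : ℝ)
    (hg : ∀ y ∈ T, ∀ n : ℕ, 1 ≤ n → |g y n| ≤ K * n) :
    Filter.limsup (fun n : ℕ => T.sup' hT (fun y => g y n) / n) Filter.atTop
      ≤ T.sup' hT (fun y => Filter.limsup (fun n : ℕ => g y n / n) Filter.atTop) := by
  set L := T.sup' hT (fun y => Filter.limsup (fun n : ℕ => g y n / n) Filter.atTop) with hLdef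
  obtain ⟨y₀, hy₀⟩ := id hT
  have hbound : ∀ y ∈ T, ∀ n : ℕ, 1 ≤ n → g y n / n ≤ K := by
    intro y hy n hn
    have hn' : (0:ℝ) < n := by exact_mod_cast hn
    rw [div_le_iff₀ hn']
    exact (abs_le.1 (hg y hy n hn)).2
  apply le_of_forall_pos_le_add
  intro η hη
  have hev : ∀ᶠ n : ℕ in atTop, ∀ y ∈ T, g y n / n < L + η := by
    rw [Filter.eventually_all_finset]
    intro y hy
    apply Filter.eventually_lt_of_limsup_lt
    · have h1 : Filter.limsup (fun n : ℕ => g y n / n) Filter.atTop ≤ L :=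
        Finset.le_sup' (f := fun y => Filter.limsup (fun n : ℕ => g y n / n) Filter.atTop) hy
      linarith
    · exact isBoundedUnder_of_tail _ K (hbound y hy)
  have hlo : Filter.IsBoundedUnder (· ≥ ·) Filter.atTop
      (fun n : ℕ => T.sup' hT (fun y => g y n) / n) := by
    apply isBoundedUnder_ge_of_tail _ (-K)
    intro n hn
    have hn' : (0:ℝ) < n := by exact_mod_cast hn
    rw [le_div_iff₀ hn']
    calc (-K) * n ≤ g y₀ n := by
          have := (abs_le.1 (hg y₀ hy₀ n hn)).1
          linarith
      _ ≤ T.sup' hT (fun y => g y n) := Finset.le_sup' (f := fun y => g y n) hy₀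
  refine Filter.limsup_le_of_le (hlo.isCoboundedUnder_le) ?_
  rw [Filter.eventually_atTop] at hev ⊢
  obtain ⟨N, hN⟩ := hev
  refine ⟨N + 1, fun n hn => ?_⟩
  have hn1 : 1 ≤ n := by omega
  have hn' : (0:ℝ) < n := by exact_mod_cast hn1
  rw [div_le_iff₀ hn']
  apply Finset.sup'_le
  intro y hy
  have := (hN n (by omega) y hy).le
  calc g y n = (g y n / n) * n := by field_simp
    _ ≤ (L + η) * n := mul_le_mul_of_nonneg_right this hn'.le

end Aux

section MDP

variable {S A : Type*} [Fintype S] [Fintype A]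
variable {Adm : S → Finset A} {p : S → A → S → ℝ} {C : S → A → ℝ} {lam : ℝ}

lemma pathProbAux_nonneg (hp : ∀ (x : S), ∀ a ∈ Adm x, (∀ y, 0 ≤ p x a y) ∧ (∑ y, p x a y) = 1)
    (π : Policy S A Adm) :
    ∀ (l : List (A × S)) (h : List (S × A)) (x : S), 0 ≤ pathProbAux Adm p π h x l := by
  intro l
  induction l with
  | nil => intro h x; exact zero_le_one
  | cons q r ih =>
    intro h x
    obtain ⟨a, y⟩ := q
    rcases eq_or_lt_of_le (π.nonneg h x a) with hz | hpos
    · simp [pathProbAux, ← hz]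
    · have ha : a ∈ Adm x := by
        by_contra hb
        exact hpos.ne' (π.supp h x a hb)
      exact mul_nonneg (mul_nonneg hpos.le ((hp x a ha).1 y)) (ih _ _)

lemma sum_cons_split {n : ℕ} (F : (Fin (n+1) → A × S) → ℝ) :
    ∑ v : Fin (n+1) → A × S, F v
      = ∑ q : (A × S) × (Fin n → A × S), F (Fin.cons q.1 q.2) :=
  (Fintype.sum_equiv (Fin.consEquiv (fun _ : Fin (n+1) => A × S)) _ _ (fun _ => rfl)).symm

omit [Fintype S] [Fintype A] in
lemma ofFn_cons {n : ℕ} (q : A × S) (w : Fin n → A × S) :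
    List.ofFn (Fin.cons q w : Fin (n+1) → A × S) = q :: List.ofFn w := by
  simp [List.ofFn_succ]

lemma sum_pathProbAux (hp : ∀ (x : S), ∀ a ∈ Adm x, (∀ y, 0 ≤ p x a y) ∧ (∑ y, p x a y) = 1)
    (π : Policy S A Adm) :
    ∀ (n : ℕ) (h : List (S × A)) (x : S),
      ∑ v : Fin n → A × S, pathProbAux Adm p π h x (List.ofFn v) = 1 := by
  intro n
  induction n with
  | zero =>
    intro h x
    simp [pathProbAux]
  | succ n ih =>
    intro h x
    rw [sum_cons_split]
    have h1 : ∀ q : (A × S) × (Fin n → A × S),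
        pathProbAux Adm p π h x (List.ofFn (Fin.cons q.1 q.2))
          = π.toFun h x q.1.1 * p x q.1.1 q.1.2 *
              pathProbAux Adm p π (h ++ [(x, q.1.1)]) q.1.2 (List.ofFn q.2) := by
      intro q; rw [ofFn_cons]; rfl
    rw [Finset.sum_congr rfl (fun q _ => h1 q)]
    rw [Fintype.sum_prod_type]
    have h2 : ∀ q : A × S,
        ∑ w : Fin n → A × S, π.toFun h x q.1 * p x q.1 q.2 *
            pathProbAux Adm p π (h ++ [(x, q.1)]) q.2 (List.ofFn w)
          = π.toFun h x q.1 * p x q.1 q.2 := by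
      intro q
      rw [← Finset.mul_sum, ih _ _, mul_one]
    rw [Finset.sum_congr rfl (fun q _ => h2 q)]
    rw [Fintype.sum_prod_type]
    have h3 : ∀ a : A, ∑ y : S, π.toFun h x a * p x a y = π.toFun h x a := by
      intro a
      rcases eq_or_ne (π.toFun h x a) 0 with hz | hnz
      · simp [hz]
      · have ha : a ∈ Adm x := by
          by_contra hb; exact hnz (π.supp h x a hb)
        rw [← Finset.mul_sum, (hp x a ha).2, mul_one]
    rw [Finset.sum_congr rfl (fun a _ => h3 a), π.sum_one]

omit [Fintype S] [Fintype A] in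
lemma lastState_cons (x : S) (a : A) (y : S) (l : List (A × S)) :
    lastState x ((a, y) :: l) = lastState y l := rfl

omit [Fintype S] [Fintype A] in
lemma lastState_append (x : S) (l₁ l₂ : List (A × S)) :
    lastState x (l₁ ++ l₂) = lastState (lastState x l₁) l₂ := by
  induction l₁ generalizing x with
  | nil => rfl
  | cons q r ih => obtain ⟨a, y⟩ := q; simp only [List.cons_append, lastState_cons, ih]

omit [Fintype S] [Fintype A] in
lemma histOf_append (x : S) (l₁ l₂ : List (A × S)) :
    histOf x (l₁ ++ l₂) = histOf x l₁ ++ histOf (lastState x l₁) l₂ := by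
  induction l₁ generalizing x with
  | nil => rfl
  | cons q r ih =>
    obtain ⟨a, y⟩ := q
    simp only [List.cons_append, histOf, lastState_cons, List.append_eq, ih]

omit [Fintype S] [Fintype A] in
lemma costSum_append (w : S → A → ℝ) (x : S) (l₁ l₂ : List (A × S)) :
    costSum w x (l₁ ++ l₂) = costSum w x l₁ + costSum w (lastState x l₁) l₂ := by
  induction l₁ generalizing x with
  | nil => simp [costSum, lastState]
  | cons q r ih =>
    obtain ⟨a, y⟩ := q
    simp only [List.cons_append, costSum, lastState_cons, List.append_eq, ih]
    ring

lemma pathProbAux_shift (π : Policy S A Adm) (pre : List (S × A)) :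
    ∀ (l : List (A × S)) (h : List (S × A)) (x : S),
      pathProbAux Adm p (shiftPolicy Adm π pre) h x l = pathProbAux Adm p π (pre ++ h) x l := by
  intro l
  induction l with
  | nil => intro h x; rfl
  | cons q r ih =>
    intro h x
    obtain ⟨a, y⟩ := q
    simp only [pathProbAux]
    rw [ih, List.append_assoc]
    rfl

lemma pathProbAux_append (π : Policy S A Adm) :
    ∀ (l₁ : List (A × S)) (h : List (S × A)) (x : S) (l₂ : List (A × S)),
      pathProbAux Adm p π h x (l₁ ++ l₂)
        = pathProbAux Adm p π h x l₁ *
            pathProbAux Adm p π (h ++ histOf x l₁) (lastState x l₁) l₂ := by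
  intro l₁
  induction l₁ with
  | nil => intro h x l₂; simp [pathProbAux, histOf, lastState]
  | cons q r ih =>
    intro h x l₂
    obtain ⟨a, y⟩ := q
    rw [List.cons_append]
    simp only [pathProbAux, histOf]
    rw [ih]
    have h2 : lastState x ((a,y) :: r) = lastState y r := rfl
    rw [h2]
    have h4 : h ++ ((x,a) :: histOf y r) = (h ++ [(x,a)]) ++ histOf y r := by simp
    rw [h4]
    ring

end MDP
section MDP2

variable {S A : Type*} [Fintype S] [Fintype A]
variable {Adm : S → Finset A} {p : S → A → S → ℝ} {C : S → A → ℝ} {lam : ℝ}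

/-- The partition function `E_x^π[exp(λ Σ_{t<n} C(X_t,A_t))]`. -/
noncomputable def Zval (π : Policy S A Adm) (pp : S → A → S → ℝ) (CC : S → A → ℝ)
    (ll : ℝ) (x : S) (n : ℕ) : ℝ :=
  ∑ v : Fin n → A × S,
    pathProb Adm pp π x (List.ofFn v) * Real.exp (ll * costSum CC x (List.ofFn v))

lemma Jn_eq_Zval (π : Policy S A Adm) (x : S) (n : ℕ) :
    Jn Adm p C lam π x n = (1 / lam) * Real.log (Zval π p C lam x n) := rfl

omit [Fintype S] [Fintype A] in
lemma costSum_bounds (cmin cmax : ℝ) (h1 : ∀ s a, cmin ≤ C s a) (h2 : ∀ s a, C s a ≤ cmax) :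
    ∀ (l : List (A × S)) (x : S),
      (l.length : ℝ) * cmin ≤ costSum C x l ∧ costSum C x l ≤ (l.length : ℝ) * cmax := by
  intro l
  induction l with
  | nil => intro x; simp [costSum]
  | cons q r ih =>
    intro x
    obtain ⟨a, y⟩ := q
    have := ih y
    have h1' := h1 x a
    have h2' := h2 x a
    simp only [costSum, List.length_cons]
    push_cast
    constructor <;> nlinarith [this.1, this.2]

variable (hp : ∀ (x : S), ∀ a ∈ Adm x, (∀ y, 0 ≤ p x a y) ∧ (∑ y, p x a y) = 1)
  (hlam : 0 < lam) (cmin cmax : ℝ)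
  (h1 : ∀ s a, cmin ≤ C s a) (h2 : ∀ s a, C s a ≤ cmax)

include hp hlam h1 h2

lemma Zval_bounds (π : Policy S A Adm) (x : S) (n : ℕ) :
    Real.exp (lam * (n * cmin)) ≤ Zval π p C lam x n ∧
      Zval π p C lam x n ≤ Real.exp (lam * (n * cmax)) := by
  have hterm : ∀ v : Fin n → A × S,
      pathProb Adm p π x (List.ofFn v) * Real.exp (lam * (n * cmin))
        ≤ pathProb Adm p π x (List.ofFn v) * Real.exp (lam * costSum C x (List.ofFn v)) ∧
      pathProb Adm p π x (List.ofFn v) * Real.exp (lam * costSum C x (List.ofFn v))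
        ≤ pathProb Adm p π x (List.ofFn v) * Real.exp (lam * (n * cmax)) := by
    intro v
    have hnn : 0 ≤ pathProb Adm p π x (List.ofFn v) := pathProbAux_nonneg hp π _ _ _
    have hlen : ((List.ofFn v).length : ℝ) = n := by rw [List.length_ofFn]
    have hb := costSum_bounds cmin cmax h1 h2 (List.ofFn v) x
    constructor
    · apply mul_le_mul_of_nonneg_left _ hnn
      apply Real.exp_le_exp.2
      apply mul_le_mul_of_nonneg_left _ hlam.le
      rw [← hlen]; exact hb.1
    · apply mul_le_mul_of_nonneg_left _ hnn
      apply Real.exp_le_exp.2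
      apply mul_le_mul_of_nonneg_left _ hlam.le
      rw [← hlen]; exact hb.2
  have hsum : ∑ v : Fin n → A × S,
      pathProb Adm p π x (List.ofFn v) = 1 := sum_pathProbAux hp π n [] x
  constructor
  · calc Real.exp (lam * (n * cmin))
        = ∑ v : Fin n → A × S, pathProb Adm p π x (List.ofFn v) * Real.exp (lam * (n * cmin)) := by
          rw [← Finset.sum_mul, hsum, one_mul]
      _ ≤ Zval π p C lam x n := Finset.sum_le_sum (fun v _ => (hterm v).1)
  · calc Zval π p C lam x n
        ≤ ∑ v : Fin n → A × S, pathProb Adm p π x (List.ofFn v) * Real.exp (lam * (n * cmax)) :=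
          Finset.sum_le_sum (fun v _ => (hterm v).2)
      _ = Real.exp (lam * (n * cmax)) := by rw [← Finset.sum_mul, hsum, one_mul]

lemma Zval_pos (π : Policy S A Adm) (x : S) (n : ℕ) : 0 < Zval π p C lam x n :=
  lt_of_lt_of_le (Real.exp_pos _) (Zval_bounds hp hlam cmin cmax h1 h2 π x n).1

lemma Jn_bounds (π : Policy S A Adm) (x : S) (n : ℕ) :
    (n : ℝ) * cmin ≤ Jn Adm p C lam π x n ∧ Jn Adm p C lam π x n ≤ (n : ℝ) * cmax := by
  have hZ := Zval_bounds hp hlam cmin cmax h1 h2 π x n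
  have hZpos := Zval_pos hp hlam cmin cmax h1 h2 π x n
  have hlog1 : lam * (n * cmin) ≤ Real.log (Zval π p C lam x n) := by
    have := Real.log_le_log (Real.exp_pos _) hZ.1
    rwa [Real.log_exp] at this
  have hlog2 : Real.log (Zval π p C lam x n) ≤ lam * (n * cmax) := by
    have := Real.log_le_log hZpos hZ.2
    rwa [Real.log_exp] at this
  rw [Jn_eq_Zval]
  have hinv : 0 < 1 / lam := by positivity
  constructor
  · have := mul_le_mul_of_nonneg_left hlog1 hinv.le
    calc (n:ℝ) * cmin = (1/lam) * (lam * (n * cmin)) := by field_simp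
      _ ≤ (1/lam) * Real.log (Zval π p C lam x n) := this
  · have := mul_le_mul_of_nonneg_left hlog2 hinv.le
    calc (1/lam) * Real.log (Zval π p C lam x n) ≤ (1/lam) * (lam * (n * cmax)) := this
      _ = (n:ℝ) * cmax := by field_simp

lemma abs_Jn_le (π : Policy S A Adm) (x : S) (n : ℕ) :
    |Jn Adm p C lam π x n| ≤ (|cmin| + |cmax|) * n := by
  have hb := Jn_bounds hp hlam cmin cmax h1 h2 π x n
  have hn : (0:ℝ) ≤ n := Nat.cast_nonneg n
  have e1 : cmin ≥ -|cmin| := neg_abs_le cmin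
  have e2 : cmax ≤ |cmax| := le_abs_self cmax
  have e3 : (0:ℝ) ≤ |cmin| := abs_nonneg _
  have e4 : (0:ℝ) ≤ |cmax| := abs_nonneg _
  rw [abs_le]
  constructor <;> nlinarith [hb.1, hb.2]

lemma Javg_bounds (π : Policy S A Adm) (x : S) :
    cmin ≤ Javg Adm p C lam π x ∧ Javg Adm p C lam π x ≤ cmax := by
  have htail : ∀ n : ℕ, 1 ≤ n → cmin ≤ Jn Adm p C lam π x n / n ∧
      Jn Adm p C lam π x n / n ≤ cmax := by
    intro n hn
    have hn' : (0:ℝ) < n := by exact_mod_cast hn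
    have hb := Jn_bounds hp hlam cmin cmax h1 h2 π x n
    constructor
    · rw [le_div_iff₀ hn']; linarith [hb.1]
    · rw [div_le_iff₀ hn']; linarith [hb.2]
  constructor
  · apply Filter.le_limsup_of_frequently_le
    · apply Filter.Eventually.frequently
      rw [Filter.eventually_atTop]
      exact ⟨1, fun n hn => (htail n hn).1⟩
    · exact isBoundedUnder_of_tail _ cmax (fun n hn => (htail n hn).2)
  · apply Filter.limsup_le_of_le
    · exact (isBoundedUnder_ge_of_tail _ cmin (fun n hn => (htail n hn).1)).isCoboundedUnder_le
    · rw [Filter.eventually_atTop]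
      exact ⟨1, fun n hn => (htail n hn).2⟩

omit hp hlam h1 h2

variable (hA : ∀ x : S, (Adm x).Nonempty)
include hA

lemma policy_nonempty : Nonempty (Policy S A Adm) :=
  ⟨stationary Adm (fun s => (hA s).choose) (fun s => (hA s).choose_spec)⟩

include hp hlam h1 h2 in
lemma Jopt_le_Javg (π : Policy S A Adm) (x : S) :
    Jopt Adm p C lam x ≤ Javg Adm p C lam π x := by
  have : Nonempty (Policy S A Adm) := policy_nonempty hA
  apply ciInf_le
  refine ⟨cmin, ?_⟩
  rintro _ ⟨π', rfl⟩
  exact (Javg_bounds hp hlam cmin cmax h1 h2 π' x).1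

include hp hlam h1 h2 in
lemma Jopt_bounds (x : S) :
    cmin ≤ Jopt Adm p C lam x ∧ Jopt Adm p C lam x ≤ cmax := by
  have hne : Nonempty (Policy S A Adm) := policy_nonempty hA
  constructor
  · exact le_ciInf (fun π' => (Javg_bounds hp hlam cmin cmax h1 h2 π' x).1)
  · obtain ⟨π'⟩ := hne
    exact le_trans (Jopt_le_Javg hp hlam cmin cmax h1 h2 hA π' x)
      (Javg_bounds hp hlam cmin cmax h1 h2 π' x).2

omit hA
include hp hlam h1 h2

/-- Statement (A): the shifted policy after a positive-probability prefix has
average cost at most that of the original policy. -/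
lemma Javg_shift_le (π : Policy S A Adm) (x₀ : S) (l : List (A × S))
    (hpos : 0 < pathProb Adm p π x₀ l) :
    Javg Adm p C lam (shiftPolicy Adm π (histOf x₀ l)) (lastState x₀ l)
      ≤ Javg Adm p C lam π x₀ := by
  set m := l.length with hm
  set y₀ := lastState x₀ l with hy₀
  set π' := shiftPolicy Adm π (histOf x₀ l) with hπ'
  set D := pathProb Adm p π x₀ l * Real.exp (lam * costSum C x₀ l) with hD
  have hDpos : 0 < D := mul_pos hpos (Real.exp_pos _)
  have key : ∀ n : ℕ, D * Zval π' p C lam y₀ n ≤ Zval π p C lam x₀ (m + n) := by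
    intro n
    set F : (Fin (m + n) → A × S) → ℝ := fun v =>
      pathProb Adm p π x₀ (List.ofFn v) * Real.exp (lam * costSum C x₀ (List.ofFn v)) with hF
    have hFnn : ∀ v, 0 ≤ F v := fun v =>
      mul_nonneg (pathProbAux_nonneg hp π _ _ _) (Real.exp_pos _).le
    have hul : List.ofFn (l.get) = l := List.ofFn_get l
    have hinj : ∀ w₁ ∈ Finset.univ, ∀ w₂ ∈ Finset.univ,
        (Fin.append l.get w₁ : Fin (m + n) → A × S) = Fin.append l.get w₂ → w₁ = w₂ := by
      intro w₁ _ w₂ _ hww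
      funext i
      have := congrFun hww (Fin.natAdd m i)
      rwa [Fin.append_right, Fin.append_right] at this
    have hofFn : ∀ w : Fin n → A × S,
        List.ofFn (Fin.append l.get w : Fin (m + n) → A × S) = l ++ List.ofFn w := by
      intro w
      rw [List.ofFn_fin_append, hul]
    have hFe : ∀ w : Fin n → A × S,
        F (Fin.append l.get w) = D * (pathProb Adm p π' y₀ (List.ofFn w) *
          Real.exp (lam * costSum C y₀ (List.ofFn w))) := by
      intro w
      rw [hF]
      simp only []
      rw [hofFn]
      have e1 : pathProb Adm p π x₀ (l ++ List.ofFn w)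
          = pathProb Adm p π x₀ l * pathProb Adm p π' y₀ (List.ofFn w) := by
        show pathProbAux Adm p π [] x₀ (l ++ List.ofFn w) = _
        rw [pathProbAux_append, List.nil_append]
        congr 1
        show pathProbAux Adm p π (histOf x₀ l) y₀ (List.ofFn w)
          = pathProbAux Adm p (shiftPolicy Adm π (histOf x₀ l)) [] y₀ (List.ofFn w)
        rw [pathProbAux_shift, List.append_nil]
      have e2 : costSum C x₀ (l ++ List.ofFn w)
          = costSum C x₀ l + costSum C y₀ (List.ofFn w) := costSum_append C x₀ l _
      rw [e1, e2, hD, mul_add, Real.exp_add]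
      ring
    calc D * Zval π' p C lam y₀ n
        = ∑ w : Fin n → A × S, F (Fin.append l.get w) := by
          rw [Zval, Finset.mul_sum]
          exact Finset.sum_congr rfl (fun w _ => (hFe w).symm)
      _ = ∑ v ∈ Finset.univ.image (fun w : Fin n → A × S => (Fin.append l.get w : Fin (m+n) → A × S)), F v :=
          (Finset.sum_image hinj).symm
      _ ≤ ∑ v : Fin (m + n) → A × S, F v :=
          Finset.sum_le_sum_of_subset_of_nonneg (Finset.subset_univ _)
            (fun v _ _ => hFnn v)
      _ = Zval π p C lam x₀ (m + n) := rfl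
  have hcomp : ∀ n : ℕ, 1 ≤ n →
      Jn Adm p C lam π' y₀ (n + 0) ≤ (-((1/lam) * Real.log D)) + Jn Adm p C lam π x₀ (n + m) := by
    intro n _
    have hZ'pos := Zval_pos hp hlam cmin cmax h1 h2 π' y₀ n
    have hZpos := Zval_pos hp hlam cmin cmax h1 h2 π x₀ (m + n)
    have hlog : Real.log (D * Zval π' p C lam y₀ n) ≤ Real.log (Zval π p C lam x₀ (m + n)) :=
      Real.log_le_log (mul_pos hDpos hZ'pos) (key n)
    rw [Real.log_mul hDpos.ne' hZ'pos.ne'] at hlog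
    have hinv : (0:ℝ) < 1/lam := by positivity
    have := mul_le_mul_of_nonneg_left hlog hinv.le
    rw [mul_add] at this
    have hnm : n + m = m + n := Nat.add_comm n m
    rw [show n + 0 = n from rfl, hnm, Jn_eq_Zval, Jn_eq_Zval]
    linarith
  exact limsup_ratio_le _ _ (|cmin| + |cmax|) 0 m (-((1/lam) * Real.log D))
    (fun n hn => abs_Jn_le hp hlam cmin cmax h1 h2 π x₀ n)
    (fun n hn => abs_Jn_le hp hlam cmin cmax h1 h2 π' y₀ n)
    hcomp

end MDP2
section MDP3

variable {S A : Type*} [Fintype S] [Fintype A]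
variable {Adm : S → Finset A} {p : S → A → S → ℝ} {C : S → A → ℝ} {lam : ℝ}

lemma xi1_gap {u v : S} (h : Jopt Adm p C lam u < Jopt Adm p C lam v) :
    Jopt Adm p C lam u + xi1 Adm p C lam ≤ Jopt Adm p C lam v := by
  rw [xi1]
  split_ifs with hconst
  · exact absurd (hconst u v) h.ne
  · have hmem : Jopt Adm p C lam v - Jopt Adm p C lam u
        ∈ {d | ∃ u' v' : S, Jopt Adm p C lam u' < Jopt Adm p C lam v' ∧
            d = Jopt Adm p C lam v' - Jopt Adm p C lam u'} := ⟨u, v, h, rfl⟩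
    have hbdd : BddBelow {d | ∃ u' v' : S, Jopt Adm p C lam u' < Jopt Adm p C lam v' ∧
        d = Jopt Adm p C lam v' - Jopt Adm p C lam u'} := by
      refine ⟨0, ?_⟩
      rintro d ⟨u', v', h', rfl⟩
      linarith
    have := csInf_le hbdd hmem
    linarith

/-- Congruence for `pathProbAux` along histories preserved by a predicate. -/
lemma pathProbAux_congr (σ τ : Policy S A Adm) (P : List (S × A) → S → Prop)
    (hPext : ∀ h s, P h s → ∀ a y, P (h ++ [(s, a)]) y)
    (hag : ∀ h s b, P h s → σ.toFun h s b = τ.toFun h s b) :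
    ∀ (l : List (A × S)) (h : List (S × A)) (x : S), P h x →
      pathProbAux Adm p σ h x l = pathProbAux Adm p τ h x l := by
  intro l
  induction l with
  | nil => intro h x _; rfl
  | cons q r ih =>
    intro h x hP
    obtain ⟨a, y⟩ := q
    simp only [pathProbAux]
    rw [hag h x a hP, ih _ _ (hPext h x hP a y)]

/-- The state at the start of `rest` (or `s'` if `rest` is empty). -/
def headState (rest : List (S × A)) (s' : S) : S :=
  match rest with
  | [] => s'
  | (y, _) :: _ => y

/-- toFun of the composite policy: play `a` at `s` first, then follow `Φ y` from the
state `y` reached after the first transition. -/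
noncomputable def compToFun (hA : ∀ x : S, (Adm x).Nonempty) (s : S) (a : A)
    (Φ : S → Policy S A Adm) : List (S × A) → S → A → ℝ
  | [], s', b => if b = (if s' = s then a else (hA s').choose) then 1 else 0
  | _ :: rest, s', b => (Φ (headState rest s')).toFun rest s' b

/-- The composite policy. -/
noncomputable def compPolicy (hA : ∀ x : S, (Adm x).Nonempty) (s : S) (a : A)
    (ha : a ∈ Adm s) (Φ : S → Policy S A Adm) : Policy S A Adm where
  toFun := compToFun hA s a Φ
  nonneg := by
    intro h s' b
    cases h with
    | nil =>
      show (if b = (if s' = s then a else (hA s').choose) then (1:ℝ) else 0) ≥ 0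
      split_ifs <;> norm_num
    | cons q rest => exact (Φ (headState rest s')).nonneg rest s' b
  sum_one := by
    intro h s'
    cases h with
    | nil =>
      show (∑ b : A, if b = (if s' = s then a else (hA s').choose) then (1:ℝ) else 0) = 1
      simp
    | cons q rest => exact (Φ (headState rest s')).sum_one rest s'
  supp := by
    intro h s' b hb
    cases h with
    | nil =>
      show (if b = (if s' = s then a else (hA s').choose) then (1:ℝ) else 0) = 0
      rw [if_neg]
      intro hEq
      apply hb
      rw [hEq]
      split_ifs with hs
      · exact hs ▸ ha
      · exact (hA s').choose_spec
    | cons q rest => exact (Φ (headState rest s')).supp rest s' b hb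

lemma pathProbAux_comp (hA : ∀ x : S, (Adm x).Nonempty) (s : S) (a : A)
    (ha : a ∈ Adm s) (Φ : S → Policy S A Adm) (y : S) (l : List (A × S)) :
    pathProbAux Adm p (compPolicy hA s a ha Φ) [(s, a)] y l
      = pathProb Adm p (Φ y) y l := by
  have h0 : pathProbAux Adm p (compPolicy hA s a ha Φ) [(s, a)] y l
      = pathProbAux Adm p (shiftPolicy Adm (compPolicy hA s a ha Φ) [(s, a)]) [] y l := by
    rw [pathProbAux_shift]
    rfl
  rw [h0]
  apply pathProbAux_congr _ _ (fun h x => (h = [] ∧ x = y) ∨ (∃ b r, h = (y, b) :: r))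
  · rintro h x (⟨rfl, rfl⟩ | ⟨b, r, rfl⟩) a' y'
    · exact Or.inr ⟨a', [], rfl⟩
    · exact Or.inr ⟨b, r ++ [(x, a')], rfl⟩
  · rintro h x b (⟨rfl, rfl⟩ | ⟨b', r, rfl⟩)
    · rfl
    · rfl
  · exact Or.inl ⟨rfl, rfl⟩

variable (hp : ∀ (x : S), ∀ a ∈ Adm x, (∀ y, 0 ≤ p x a y) ∧ (∑ y, p x a y) = 1)
  (hlam : 0 < lam) (cmin cmax : ℝ)
  (h1 : ∀ s a, cmin ≤ C s a) (h2 : ∀ s a, C s a ≤ cmax)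
  (hA : ∀ x : S, (Adm x).Nonempty)

include hp in
lemma exists_pos_trans (s : S) (a : A) (ha : a ∈ Adm s) : ∃ y : S, 0 < p s a y := by
  by_contra hno
  push_neg at hno
  have : ∑ y : S, p s a y = 0 := by
    apply Finset.sum_eq_zero
    intro y _
    exact le_antisymm (hno y) ((hp s a ha).1 y)
  rw [(hp s a ha).2] at this
  exact one_ne_zero this

include hp hlam h1 h2 hA in
/-- Statement (B′): from any state, playing an admissible action `a` and then following
`Φ`, the optimal cost at `s` is at most the average cost of some `Φ y` with `p s a y > 0`. -/
lemma exists_step (s : S) (a : A) (ha : a ∈ Adm s) (Φ : S → Policy S A Adm) :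
    ∃ y : S, 0 < p s a y ∧
      Jopt Adm p C lam s ≤ Javg Adm p C lam (Φ y) y := by
  classical
  set T : Finset S := Finset.univ.filter (fun y => 0 < p s a y) with hT
  obtain ⟨y₁, hy₁⟩ := exists_pos_trans hp s a ha
  have hy₁T : y₁ ∈ T := by simp [hT, hy₁]
  have hTne : T.Nonempty := ⟨y₁, hy₁T⟩
  set σ := compPolicy hA s a ha Φ with hσ
  -- Z decomposition
  have hZdec : ∀ n : ℕ, Zval σ p C lam s (n+1)
      = Real.exp (lam * C s a) * ∑ y : S, p s a y * Zval (Φ y) p C lam y n := by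
    intro n
    rw [Zval, sum_cons_split]
    have hterm : ∀ q : (A × S) × (Fin n → A × S),
        pathProb Adm p σ s (List.ofFn (Fin.cons q.1 q.2)) *
            Real.exp (lam * costSum C s (List.ofFn (Fin.cons q.1 q.2)))
          = if q.1.1 = a then
              Real.exp (lam * C s a) * (p s a q.1.2 *
                (pathProb Adm p (Φ q.1.2) q.1.2 (List.ofFn q.2) *
                  Real.exp (lam * costSum C q.1.2 (List.ofFn q.2))))
            else 0 := by
      rintro ⟨⟨b, y⟩, w⟩
      rw [ofFn_cons]
      show σ.toFun [] s b * p s b y * pathProbAux Adm p σ [(s, b)] y (List.ofFn w) *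
          Real.exp (lam * (C s b + costSum C y (List.ofFn w))) = _
      have htf : σ.toFun [] s b = if b = a then 1 else 0 := by
        show compToFun hA s a Φ [] s b = _
        rw [compToFun, if_pos rfl]
      split_ifs with hb
      · subst hb
        rw [htf, if_pos rfl, pathProbAux_comp, mul_add, Real.exp_add]
        ring
      · rw [htf, if_neg hb]
        ring
    rw [Finset.sum_congr rfl (fun q _ => hterm q)]
    rw [Fintype.sum_prod_type]
    have hout : ∀ q : A × S,
        ∑ w : Fin n → A × S, (if q.1 = a then
            Real.exp (lam * C s a) * (p s a q.2 *
              (pathProb Adm p (Φ q.2) q.2 (List.ofFn w) *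
                Real.exp (lam * costSum C q.2 (List.ofFn w))))
          else 0)
        = if q.1 = a then
            Real.exp (lam * C s a) * (p s a q.2 * Zval (Φ q.2) p C lam q.2 n) else 0 := by
      rintro ⟨b, y⟩
      split_ifs with hb
      · rw [← Finset.mul_sum, ← Finset.mul_sum]
        rfl
      · exact Finset.sum_const_zero
    rw [Finset.sum_congr rfl (fun q _ => hout q)]
    rw [Fintype.sum_prod_type]
    have hinner : ∀ b : A,
        (∑ y : S, if b = a then
            Real.exp (lam * C s a) * (p s a y * Zval (Φ y) p C lam y n) else 0)
        = if b = a then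
            Real.exp (lam * C s a) * ∑ y : S, p s a y * Zval (Φ y) p C lam y n else 0 := by
      intro b
      split_ifs with hb
      · rw [← Finset.mul_sum]
      · exact Finset.sum_const_zero
    rw [Finset.sum_congr rfl (fun b _ => hinner b), Finset.sum_ite_eq' Finset.univ a]
    simp
  -- positivity of the inner partition sum
  have hGpos : ∀ n : ℕ, 0 < ∑ y : S, p s a y * Zval (Φ y) p C lam y n := by
    intro n
    apply Finset.sum_pos'
    · intro y _
      exact mul_nonneg ((hp s a ha).1 y)
        (Zval_pos hp hlam cmin cmax h1 h2 (Φ y) y n).le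
    · exact ⟨y₁, Finset.mem_univ _,
        mul_pos hy₁ (Zval_pos hp hlam cmin cmax h1 h2 (Φ y₁) y₁ n)⟩
  set G : ℕ → ℝ := fun n => ∑ y : S, p s a y * Zval (Φ y) p C lam y n with hG
  set Jf : ℕ → ℝ := fun n => (1/lam) * Real.log (G n) with hJf
  set W : ℕ → ℝ := fun n => T.sup' hTne (fun y => Jn Adm p C lam (Φ y) y n) with hW
  have hJ' : ∀ n : ℕ, Jn Adm p C lam σ s (n+1) = C s a + Jf n := by
    intro n
    rw [Jn_eq_Zval, hZdec n, Real.log_mul (Real.exp_ne_zero _) (hGpos n).ne',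
      Real.log_exp, hJf]
    simp only []
    field_simp
    ring
  have hJfW : ∀ n : ℕ, Jf n ≤ W n := by
    intro n
    have hfil : ∀ y ∈ Finset.univ, y ∉ T → p s a y * Zval (Φ y) p C lam y n = 0 := by
      intro y _ hyT
      have : ¬ 0 < p s a y := by
        intro hc; exact hyT (by simp [hT, hc])
      have : p s a y = 0 := le_antisymm (not_lt.1 this) ((hp s a ha).1 y)
      rw [this, zero_mul]
    have hGT : G n = ∑ y ∈ T, p s a y * Zval (Φ y) p C lam y n := by
      rw [hG]
      exact (Finset.sum_subset (Finset.subset_univ T) hfil).symm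
    have hpT : ∑ y ∈ T, p s a y = 1 := by
      rw [← (hp s a ha).2]
      apply Finset.sum_subset (Finset.subset_univ T)
      intro y _ hyT
      have : ¬ 0 < p s a y := by
        intro hc; exact hyT (by simp [hT, hc])
      exact le_antisymm (not_lt.1 this) ((hp s a ha).1 y)
    have hZW : ∀ y ∈ T, Zval (Φ y) p C lam y n ≤ Real.exp (lam * W n) := by
      intro y hy
      have hZy : Zval (Φ y) p C lam y n
          = Real.exp (lam * Jn Adm p C lam (Φ y) y n) := by
        rw [Jn_eq_Zval]
        rw [show lam * ((1/lam) * Real.log (Zval (Φ y) p C lam y n)) =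
          Real.log (Zval (Φ y) p C lam y n) by field_simp]
        rw [Real.exp_log (Zval_pos hp hlam cmin cmax h1 h2 (Φ y) y n)]
      rw [hZy]
      apply Real.exp_le_exp.2
      apply mul_le_mul_of_nonneg_left _ hlam.le
      exact Finset.le_sup' (f := fun y => Jn Adm p C lam (Φ y) y n) hy
    have hGle : G n ≤ Real.exp (lam * W n) := by
      calc G n = ∑ y ∈ T, p s a y * Zval (Φ y) p C lam y n := hGT
        _ ≤ ∑ y ∈ T, p s a y * Real.exp (lam * W n) := by
            apply Finset.sum_le_sum
            intro y hy
            have hpy : 0 < p s a y := (Finset.mem_filter.1 hy).2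
            exact mul_le_mul_of_nonneg_left (hZW y hy) hpy.le
        _ = Real.exp (lam * W n) := by rw [← Finset.sum_mul, hpT, one_mul]
    rw [hJf]
    simp only []
    have hlog0 : Real.log (G n) ≤ lam * W n := by
      have := Real.log_le_log (hGpos n) hGle
      rwa [Real.log_exp] at this
    have hinv : (0:ℝ) < 1/lam := by positivity
    calc (1/lam) * Real.log (G n) ≤ (1/lam) * (lam * W n) :=
          mul_le_mul_of_nonneg_left hlog0 hinv.le
      _ = W n := by field_simp
  set c₁ : ℝ := (1/lam) * Real.log (p s a y₁) with hc₁
  have hJflb : ∀ n : ℕ, c₁ + (n:ℝ) * cmin ≤ Jf n := by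
    intro n
    have hsingle : p s a y₁ * Zval (Φ y₁) p C lam y₁ n ≤ G n := by
      rw [hG]
      apply Finset.single_le_sum (f := fun y => p s a y * Zval (Φ y) p C lam y n)
        (fun y _ => mul_nonneg ((hp s a ha).1 y)
          (Zval_pos hp hlam cmin cmax h1 h2 (Φ y) y n).le) (Finset.mem_univ y₁)
    have hZlb := (Zval_bounds hp hlam cmin cmax h1 h2 (Φ y₁) y₁ n).1
    have hprod : p s a y₁ * Real.exp (lam * ((n:ℝ) * cmin)) ≤ G n := by
      calc p s a y₁ * Real.exp (lam * ((n:ℝ) * cmin))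
          ≤ p s a y₁ * Zval (Φ y₁) p C lam y₁ n :=
            mul_le_mul_of_nonneg_left hZlb hy₁.le
        _ ≤ G n := hsingle
    have hppos : 0 < p s a y₁ * Real.exp (lam * ((n:ℝ) * cmin)) :=
      mul_pos hy₁ (Real.exp_pos _)
    have hlog := Real.log_le_log hppos hprod
    rw [Real.log_mul hy₁.ne' (Real.exp_ne_zero _), Real.log_exp] at hlog
    have hinv : (0:ℝ) < 1/lam := by positivity
    have := mul_le_mul_of_nonneg_left hlog hinv.le
    rw [hJf]
    simp only []
    calc c₁ + (n:ℝ) * cmin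
        = (1/lam) * (Real.log (p s a y₁) + lam * ((n:ℝ) * cmin)) := by
          rw [hc₁]; field_simp
      _ ≤ (1/lam) * Real.log (G n) := this
  set K : ℝ := |c₁| + |cmin| + |cmax| with hK
  have habs : ∀ (ρ : Policy S A Adm) (y : S) (n : ℕ), 1 ≤ n →
      |Jn Adm p C lam ρ y n| ≤ K * n := by
    intro ρ y n hn
    have := abs_Jn_le hp hlam cmin cmax h1 h2 ρ y n
    have hn' : (1:ℝ) ≤ n := by exact_mod_cast hn
    have h0 : (0:ℝ) ≤ |c₁| := abs_nonneg _
    nlinarith [abs_nonneg (Jn Adm p C lam ρ y n)]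
  have hJfabs : ∀ n : ℕ, 1 ≤ n → |Jf n| ≤ K * n := by
    intro n hn
    have hn' : (1:ℝ) ≤ n := by exact_mod_cast hn
    have hub' := le_trans (hJfW n) (Finset.sup'_le hTne _ (fun y hy =>
      (abs_le.1 (habs (Φ y) y n hn)).2))
    have hlb' := hJflb n
    rw [abs_le]
    constructor
    · have e1 : c₁ ≥ -|c₁| := neg_abs_le c₁
      have e2 : cmin ≥ -|cmin| := neg_abs_le cmin
      have e3 : (0:ℝ) ≤ |cmax| := abs_nonneg _
      have e4 : (0:ℝ) ≤ |c₁| := abs_nonneg _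
      have e5 : (0:ℝ) ≤ |cmin| := abs_nonneg _
      rw [hK]
      nlinarith
    · exact hub'
  have hWabs : ∀ n : ℕ, 1 ≤ n → |W n| ≤ K * n := by
    intro n hn
    rw [abs_le]
    constructor
    · have := (abs_le.1 (habs (Φ y₁) y₁ n hn)).1
      calc -(K * n) ≤ Jn Adm p C lam (Φ y₁) y₁ n := this
        _ ≤ W n := Finset.le_sup' (f := fun y => Jn Adm p C lam (Φ y) y n) hy₁T
    · exact Finset.sup'_le hTne _ (fun y hy => (abs_le.1 (habs (Φ y) y n hn)).2)
  -- chain of limsup inequalities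
  have step1 : Javg Adm p C lam σ s
      ≤ Filter.limsup (fun n : ℕ => Jf n / n) Filter.atTop := by
    apply limsup_ratio_le _ _ K 1 0
    · exact fun n hn => hJfabs n hn
    · exact fun n hn => habs σ s n hn
    · intro n _
      exact le_of_eq (hJ' n)
  have step2 : Filter.limsup (fun n : ℕ => Jf n / n) Filter.atTop
      ≤ Filter.limsup (fun n : ℕ => W n / n) Filter.atTop := by
    apply limsup_ratio_le _ _ K 0 0 0
    · exact fun n hn => hWabs n hn
    · exact fun n hn => hJfabs n hn
    · intro n _
      simpa using hJfW n
  have step3 : Filter.limsup (fun n : ℕ => W n / n) Filter.atTop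
      ≤ T.sup' hTne (fun y => Javg Adm p C lam (Φ y) y) := by
    apply limsup_finmax_le T hTne (fun y n => Jn Adm p C lam (Φ y) y n) K
    exact fun y _ n hn => habs (Φ y) y n hn
  obtain ⟨y, hyT, hysup⟩ := Finset.exists_mem_eq_sup' hTne
    (fun y => Javg Adm p C lam (Φ y) y)
  refine ⟨y, (Finset.mem_filter.1 hyT).2, ?_⟩
  calc Jopt Adm p C lam s ≤ Javg Adm p C lam σ s :=
        Jopt_le_Javg hp hlam cmin cmax h1 h2 hA σ s
    _ ≤ T.sup' hTne (fun y => Javg Adm p C lam (Φ y) y) :=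
        le_trans step1 (le_trans step2 step3)
    _ = Javg Adm p C lam (Φ y) y := hysup

end MDP3
section MDP4

variable {S A : Type*} [Fintype S] [Fintype A]
variable {Adm : S → Finset A} {p : S → A → S → ℝ} {C : S → A → ℝ} {lam : ℝ}

lemma pathProb_single (π : Policy S A Adm) (s : S) (a : A) (y : S) :
    pathProb Adm p π s [(a, y)] = π.toFun [] s a * p s a y := by
  show pathProbAux Adm p π [] s [(a, y)] = _
  simp [pathProbAux]

lemma pathProb_snoc (π : Policy S A Adm) (x : S) (l : List (A × S)) (a : A) (y : S) :
    pathProb Adm p π x (l ++ [(a, y)])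
      = pathProb Adm p π x l *
          (π.toFun (histOf x l) (lastState x l) a * p (lastState x l) a y) := by
  show pathProbAux Adm p π [] x (l ++ [(a, y)]) = _
  rw [pathProbAux_append, List.nil_append]
  congr 1
  simp [pathProbAux]

variable (hp : ∀ (x : S), ∀ a ∈ Adm x, (∀ y, 0 ≤ p x a y) ∧ (∑ y, p x a y) = 1)
  (hlam : 0 < lam) (cmin cmax : ℝ)
  (h1 : ∀ s a, cmin ≤ C s a) (h2 : ∀ s a, C s a ≤ cmax)
  (hA : ∀ x : S, (Adm x).Nonempty)

include hp hlam h1 h2 hA in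
/-- Every `B*(s)` is nonempty (needs `0 < ε < ξ₁`). -/
lemma Bg_nonempty (ε : ℝ) (hε0 : 0 < ε) (hεxi : ε < xi1 Adm p C lam) (s : S) :
    ∃ a, a ∈ Bg Adm p (Jopt Adm p C lam) s := by
  classical
  have hne : Nonempty (Policy S A Adm) := policy_nonempty hA
  have hlt : (⨅ ρ : Policy S A Adm, Javg Adm p C lam ρ s) < Jopt Adm p C lam s + ε := by
    rw [← Jopt]; linarith
  obtain ⟨π₀, hπ₀⟩ := exists_lt_of_ciInf_lt hlt
  obtain ⟨a, hπa⟩ : ∃ a, π₀.toFun [] s a ≠ 0 := by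
    by_contra hno
    push_neg at hno
    have := π₀.sum_one [] s
    rw [Finset.sum_eq_zero (fun a _ => hno a)] at this
    exact one_ne_zero this.symm
  have ha : a ∈ Adm s := by
    by_contra hb
    exact hπa (π₀.supp [] s a hb)
  have hπa' : 0 < π₀.toFun [] s a := (π₀.nonneg [] s a).lt_of_ne (Ne.symm hπa)
  have hup : ∀ y, 0 < p s a y → Jopt Adm p C lam y ≤ Jopt Adm p C lam s := by
    intro y hy
    have hpos : 0 < pathProb Adm p π₀ s [(a, y)] := by
      rw [pathProb_single]
      exact mul_pos hπa' hy
    have hshift := Javg_shift_le hp hlam cmin cmax h1 h2 π₀ s [(a, y)] hpos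
    have hylast : lastState s [(a, y)] = y := rfl
    rw [hylast] at hshift
    have hJy : Jopt Adm p C lam y ≤ Javg Adm p C lam π₀ s :=
      le_trans (Jopt_le_Javg hp hlam cmin cmax h1 h2 hA _ y) hshift
    by_contra hc
    push_neg at hc
    have hgap := xi1_gap hc
    linarith
  obtain ⟨y₁, hy₁⟩ := exists_pos_trans hp s a ha
  have himgne : (Jopt Adm p C lam '' {y | 0 < p s a y}).Nonempty := ⟨_, y₁, hy₁, rfl⟩
  have hub : sSup (Jopt Adm p C lam '' {y | 0 < p s a y}) ≤ Jopt Adm p C lam s := by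
    apply csSup_le himgne
    rintro z ⟨y, hy, rfl⟩
    exact hup y hy
  have hlb : Jopt Adm p C lam s ≤ sSup (Jopt Adm p C lam '' {y | 0 < p s a y}) := by
    apply le_of_forall_pos_le_add
    intro η hη
    have hch : ∀ y : S, ∃ ρ : Policy S A Adm,
        Javg Adm p C lam ρ y < Jopt Adm p C lam y + η := by
      intro y
      apply exists_lt_of_ciInf_lt
      rw [← Jopt]
      linarith [hη]
    choose Φ hΦ using hch
    obtain ⟨y, hy, hstep⟩ := exists_step hp hlam cmin cmax h1 h2 hA s a ha Φ
    have himg : Jopt Adm p C lam y ≤ sSup (Jopt Adm p C lam '' {y | 0 < p s a y}) :=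
      le_csSup ((Set.toFinite _).bddAbove) ⟨y, hy, rfl⟩
    linarith [hΦ y]
  exact ⟨a, ha, le_antisymm hlb hub⟩

end MDP4
section MDP5

variable {S A : Type*} [Fintype S] [Fintype A]
variable {Adm : S → Finset A} {p : S → A → S → ℝ} {C : S → A → ℝ} {lam : ℝ}

/-- `(h, s')` is a positive-probability history of `π` started at `x`. -/
def ReachPos (pp : S → A → S → ℝ) (π : Policy S A Adm) (x : S)
    (h : List (S × A)) (s' : S) : Prop :=
  ∃ l : List (A × S), histOf x l = h ∧ lastState x l = s' ∧ 0 < pathProb Adm pp π x l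

/-- The modified policy: follow `π` on positive histories of `π` from `x`,
otherwise play the `B*` selector `bstar`. -/
noncomputable def deltaPolicy (pp : S → A → S → ℝ) (π : Policy S A Adm) (x : S)
    (bstar : S → A) (hb : ∀ s, bstar s ∈ Adm s) : Policy S A Adm where
  toFun h s' b :=
    if ReachPos pp π x h s' then π.toFun h s' b else (if b = bstar s' then 1 else 0)
  nonneg := by
    intro h s' b
    split_ifs with h1 h2
    · exact π.nonneg h s' b
    · norm_num
    · norm_num
  sum_one := by
    intro h s'
    by_cases hr : ReachPos pp π x h s'
    · simp only [if_pos hr]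
      exact π.sum_one h s'
    · simp [if_neg hr]
  supp := by
    intro h s' b hb'
    by_cases hr : ReachPos pp π x h s'
    · simp only [if_pos hr]
      exact π.supp h s' b hb'
    · simp only [if_neg hr]
      rw [if_neg]
      intro hEq
      exact hb' (hEq ▸ hb s')

end MDP5
/-- if `x` minimizes `J*(λ,·)` and `π` is `ε`-optimal at `x` with
`ε ∈ (0,ξ)`, then there is a policy `δ ∈ 𝒫*` with `P_x^π = P_x^δ`. -/
theorem exists_Pstar_policy_same_law
    (hA : ∀ x, (Adm x).Nonempty)
    (hp : ∀ (x : S), ∀ a ∈ Adm x, (∀ y, 0 ≤ p x a y) ∧ (∑ y, p x a y) = 1)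
    (hlam : 0 < lam) (α : ℝ) (hα : α ∈ Set.Ioo (0 : ℝ) 1)
    (z : S) (M : ℝ) (hDoe : Doeblin Adm p z M)
    (β β₀ : ℝ) (hβ : β ∈ Set.Ioo (0 : ℝ) 1) (hβ₀ : 0 < β₀)
    (hTail : ∀ (x : S) (π : Policy S A Adm) (n : ℕ),
      survProb Adm p π x z n ≤ β₀ * β ^ (n + 1))
    (x : S) (hx : Jopt Adm p C lam x = ⨅ y : S, Jopt Adm p C lam y)
    (ε : ℝ) (hε : ε ∈ Set.Ioo 0 (xi Adm p C lam α β))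
    (π : Policy S A Adm) (hopt : EpsOptimalAt Adm p C lam π x ε) :
    ∃ δ ∈ Pstar Adm p C lam,
      ∀ l : List (A × S), pathProb Adm p π x l = pathProb Adm p δ x l := by
  classical
  have hS : Nonempty S := ⟨x⟩
  have hAne : Nonempty A := ⟨(hA x).choose⟩
  obtain ⟨qmin, hqmin⟩ := Finite.exists_min (fun q : S × A => C q.1 q.2)
  obtain ⟨qmax, hqmax⟩ := Finite.exists_max (fun q : S × A => C q.1 q.2)
  set cmin := C qmin.1 qmin.2 with hcmin
  set cmax := C qmax.1 qmax.2 with hcmax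
  have h1 : ∀ s a, cmin ≤ C s a := fun s a => hqmin (s, a)
  have h2 : ∀ s a, C s a ≤ cmax := fun s a => hqmax (s, a)
  have hε0 : 0 < ε := hε.1
  have hεxi : ε < xi1 Adm p C lam := by
    have := hε.2
    rw [xi] at this
    exact lt_of_lt_of_le this (min_le_right _ _)
  have hxmin : ∀ y, Jopt Adm p C lam x ≤ Jopt Adm p C lam y := by
    intro y
    rw [hx]
    apply ciInf_le
    refine ⟨cmin, ?_⟩
    rintro _ ⟨y', rfl⟩
    exact (Jopt_bounds hp hlam cmin cmax h1 h2 hA y').1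
  -- Claim R: every positively reachable state has minimal optimal cost
  have reachJ : ∀ l : List (A × S), 0 < pathProb Adm p π x l →
      Jopt Adm p C lam (lastState x l) = Jopt Adm p C lam x := by
    intro l hpos
    by_contra hne
    have hlt : Jopt Adm p C lam x < Jopt Adm p C lam (lastState x l) :=
      lt_of_le_of_ne (hxmin _) (Ne.symm hne)
    have hgap := xi1_gap hlt
    have hshift := Javg_shift_le hp hlam cmin cmax h1 h2 π x l hpos
    have hJ := Jopt_le_Javg hp hlam cmin cmax h1 h2 hA
      (shiftPolicy Adm π (histOf x l)) (lastState x l)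
    have hopt' : Javg Adm p C lam π x ≤ Jopt Adm p C lam x + ε := hopt
    linarith
  -- the B* selector
  have hBne := Bg_nonempty hp hlam cmin cmax h1 h2 hA ε hε0 hεxi
  set bstar : S → A := fun s => (hBne s).choose with hbstar
  have hbB : ∀ s, bstar s ∈ Bg Adm p (Jopt Adm p C lam) s := fun s => (hBne s).choose_spec
  have hbAdm : ∀ s, bstar s ∈ Adm s := fun s => (hbB s).1
  set δ := deltaPolicy p π x bstar hbAdm with hδ
  -- path probabilities from x agree
  have hagree : ∀ (l : List (A × S)) (h : List (S × A)) (s' : S), ReachPos p π x h s' →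
      pathProbAux Adm p π h s' l = pathProbAux Adm p δ h s' l := by
    intro l
    induction l with
    | nil => intro h s' _; rfl
    | cons q r ih =>
      intro h s' hR
      obtain ⟨a, y⟩ := q
      have hδtf : δ.toFun h s' a = π.toFun h s' a := by
        show (if ReachPos p π x h s' then _ else _) = _
        rw [if_pos hR]
      simp only [pathProbAux]
      rw [hδtf]
      rcases eq_or_ne (π.toFun h s' a * p s' a y) 0 with hz | hnz
      · rw [hz, zero_mul, zero_mul]
      · have hπpos : 0 < π.toFun h s' a := by
          rcases (π.nonneg h s' a).lt_or_eq with h' | h'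
          · exact h'
          · exact absurd (by rw [← h', zero_mul]) hnz
        have haAdm : a ∈ Adm s' := by
          by_contra hb
          exact hπpos.ne' (π.supp h s' a hb)
        have hppos : 0 < p s' a y := by
          apply lt_of_le_of_ne ((hp s' a haAdm).1 y)
          intro h0
          exact hnz (by rw [← h0, mul_zero])
        obtain ⟨l₀, hh, hs', hl₀⟩ := hR
        have hRext : ReachPos p π x (h ++ [(s', a)]) y := by
          refine ⟨l₀ ++ [(a, y)], ?_, ?_, ?_⟩
          · rw [histOf_append, hh, hs']; rfl
          · rw [lastState_append, hs']; rfl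
          · rw [pathProb_snoc, hh, hs']
            exact mul_pos hl₀ (mul_pos hπpos hppos)
        rw [ih _ _ hRext]
  have hReachNil : ReachPos p π x [] x := by
    refine ⟨[], rfl, rfl, ?_⟩
    show (0:ℝ) < 1
    norm_num
  have hpatheq : ∀ l, pathProb Adm p π x l = pathProb Adm p δ x l :=
    fun l => hagree l [] x hReachNil
  -- actions under δ are always in B*
  have hforce : ∀ (x' : S) (l₁ : List (A × S)) (a : A) (y : S),
      pathProb Adm p δ x' (l₁ ++ [(a, y)]) ≠ 0 →
      a ∈ Bg Adm p (Jopt Adm p C lam) (lastState x' l₁) := by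
    intro x' l₁ a y hne0
    rw [pathProb_snoc] at hne0
    set s' := lastState x' l₁ with hs'def
    have hδa : δ.toFun (histOf x' l₁) s' a ≠ 0 := by
      intro h0
      exact hne0 (by rw [h0, zero_mul, mul_zero])
    by_cases hR : ReachPos p π x (histOf x' l₁) s'
    · have hδπ : δ.toFun (histOf x' l₁) s' a = π.toFun (histOf x' l₁) s' a := by
        show (if ReachPos p π x (histOf x' l₁) s' then _ else _) = _
        rw [if_pos hR]
      have hπa : π.toFun (histOf x' l₁) s' a ≠ 0 := by rwa [hδπ] at hδa
      have hπapos : 0 < π.toFun (histOf x' l₁) s' a :=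
        (π.nonneg _ _ _).lt_of_ne (Ne.symm hπa)
      have haAdm : a ∈ Adm s' := by
        by_contra hb
        exact hπa (π.supp _ _ _ hb)
      obtain ⟨l₀, hh, hls', hl₀⟩ := hR
      have hJs' : Jopt Adm p C lam s' = Jopt Adm p C lam x := by
        have := reachJ l₀ hl₀
        rwa [hls'] at this
      have hall : ∀ y', 0 < p s' a y' → Jopt Adm p C lam y' = Jopt Adm p C lam x := by
        intro y' hy'
        have hpos : 0 < pathProb Adm p π x (l₀ ++ [(a, y')]) := by
          rw [pathProb_snoc, hh, hls']
          exact mul_pos hl₀ (mul_pos hπapos hy')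
        have := reachJ _ hpos
        rwa [lastState_append, hls'] at this
      refine ⟨haAdm, ?_⟩
      obtain ⟨y₁, hy₁⟩ := exists_pos_trans hp s' a haAdm
      apply le_antisymm
      · have hmem : Jopt Adm p C lam y₁ ∈
            Jopt Adm p C lam '' {y' | 0 < p s' a y'} := ⟨y₁, hy₁, rfl⟩
        have := le_csSup ((Set.toFinite _).bddAbove) hmem
        rw [hall y₁ hy₁, ← hJs'] at this
        exact this
      · have himgne : (Jopt Adm p C lam '' {y' | 0 < p s' a y'}).Nonempty :=
          ⟨Jopt Adm p C lam y₁, ⟨y₁, hy₁, rfl⟩⟩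
        apply csSup_le himgne
        rintro z' ⟨y', hy', rfl⟩
        rw [hall y' hy', ← hJs']
    · have hδb : δ.toFun (histOf x' l₁) s' a = if a = bstar s' then 1 else 0 := by
        show (if ReachPos p π x (histOf x' l₁) s' then _ else _) = _
        rw [if_neg hR]
      rw [hδb] at hδa
      have hab : a = bstar s' := by
        by_contra hbc
        rw [if_neg hbc] at hδa
        exact hδa rfl
      rw [hab]
      exact hbB s'
  -- δ ∈ 𝒫*
  have hPstar : δ ∈ Pstar Adm p C lam := by
    intro x' t
    rw [cylProb]
    have hsplit : ∀ v : Fin (t+1) → A × S, pathProb Adm p δ x' (List.ofFn v) ≠ 0 →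
        (v (Fin.last t)).1 ∈ Bg Adm p (Jopt Adm p C lam) (stateAt x' (List.ofFn v) t) := by
      intro v hv
      have hofn : List.ofFn v
          = (List.ofFn fun i : Fin t => v i.castSucc) ++ [v (Fin.last t)] := by
        rw [List.ofFn_succ', List.concat_eq_append]
      set l₁ := List.ofFn fun i : Fin t => v i.castSucc with hl₁
      have hstate : stateAt x' (List.ofFn v) t = lastState x' l₁ := by
        rw [stateAt, hofn, List.take_left' (by rw [hl₁, List.length_ofFn])]
        rfl
      have hv' : pathProb Adm p δ x' (l₁ ++ [((v (Fin.last t)).1, (v (Fin.last t)).2)]) ≠ 0 := by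
        rw [Prod.mk.eta, ← hofn]
        exact hv
      have := hforce x' l₁ (v (Fin.last t)).1 (v (Fin.last t)).2 hv'
      rwa [hstate]
    have hterm : ∀ v : Fin (t+1) → A × S,
        (if (v (Fin.last t)).1 ∈
            Bg Adm p (Jopt Adm p C lam) (stateAt x' (List.ofFn v) t) then
          pathProb Adm p δ x' (List.ofFn v) else 0)
        = pathProb Adm p δ x' (List.ofFn v) := by
      intro v
      by_cases hv : pathProb Adm p δ x' (List.ofFn v) = 0
      · split_ifs
        · rfl
        · rw [hv]
      · rw [if_pos (hsplit v hv)]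
    rw [Finset.sum_congr rfl (fun v _ => hterm v)]
    exact sum_pathProbAux hp δ (t+1) [] x'
  exact ⟨δ, hPstar, hpatheq⟩

end RiskSensitive
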